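/- Let Q ⊂ ℝⁿ be a closed set and let M ⊂ Q be identifiable at x̄ for a Fréchet normal v̄ ∈ N̂_Q(x̄). If M is prox-regular at x̄ for v̄ (viewing v̄ as an element of N_M(x̄)), then Q is prox-regular at x̄ for v̄. -/

import Mathlib

open Filter Topology Metric Set
open scoped RealInnerProductSpace

noncomputable section

/-- `ℝⁿ` with the Euclidean structure. -/
abbrev Euc (n : ℕ) : Type := EuclideanSpace ℝ (Fin n)

section Defs

variable {H : Type*} [NormedAddCommGroup H] [InnerProductSpace ℝ H]
variable {H' : Type*} [NormedAddCommGroup H'] [InnerProductSpace ℝ H']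

/-- The inclusion `M ⊆ Q` holds locally around the point `x`. -/
def LocallyIncl {α : Type*} [TopologicalSpace α] (M Q : Set α) (x : α) : Prop :=
  ∃ U ∈ 𝓝 x, M ∩ U ⊆ Q ∩ U

/-- The equality `M = Q` holds locally around the point `x`. -/
def LocallyEq {α : Type*} [TopologicalSpace α] (M Q : Set α) (x : α) : Prop :=
  ∃ U ∈ 𝓝 x, M ∩ U = Q ∩ U

/-- The graph of a set-valued mapping. -/
def svGraph (G : H → Set H') : Set (H × H') := {p | p.2 ∈ G p.1}

/-- `G⁻¹(W)`, the preimage of a set `W` under the set-valued mapping `G`. -/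
def svPreimage (G : H → Set H') (W : Set H') : Set H := {x | (G x ∩ W).Nonempty}

/-- `M` is identifiable relative to the set-valued mapping `G` at `x` for `v ∈ G x`:
the inclusion `gph G ⊆ M × H'` holds locally around `(x, v)`. -/
def IdentifiableRel (G : H → Set H') (M : Set H) (x : H) (v : H') : Prop :=
  LocallyIncl (svGraph G) (M ×ˢ (univ : Set H')) (x, v)

/-- `M` is necessary relative to `G` at `x` for `v ∈ G x`: `x ∈ M` and the function
`y ↦ d(v, G y)`, restricted to `M`, is continuous at `x`. -/
def NecessaryRel (G : H → Set H') (M : Set H) (x : H) (v : H') : Prop :=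
  x ∈ M ∧ ContinuousWithinAt (fun y => EMetric.infEdist v (G y)) M x

/-- `M` is a locally minimal identifiable set relative to `G` at `x` for `v`. -/
def LocallyMinimalIdentifiableRel (G : H → Set H') (M : Set H) (x : H) (v : H') : Prop :=
  IdentifiableRel G M x v ∧ ∀ M' : Set H, IdentifiableRel G M' x v → LocallyIncl M M' x

/-- `M` is a locally maximal necessary set relative to `G` at `x` for `v`. -/
def LocallyMaximalNecessaryRel (G : H → Set H') (M : Set H) (x : H) (v : H') : Prop :=
  NecessaryRel G M x v ∧ ∀ M' : Set H, NecessaryRel G M' x v → LocallyIncl M' M x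

/-- The proximal normal cone to `Q` at `x`. -/
def proxNormalCone (Q : Set H) (x : H) : Set H :=
  {v | x ∈ Q ∧ ∃ r > (0:ℝ), ∀ y ∈ Q, dist (x + r⁻¹ • v) x ≤ dist (x + r⁻¹ • v) y}

/-- The Fréchet normal cone to `Q` at `x`. -/
def frechetNormalCone (Q : Set H) (x : H) : Set H :=
  {v | x ∈ Q ∧ ∀ ε > (0:ℝ), ∃ δ > (0:ℝ), ∀ y ∈ Q, dist y x < δ → ⟪v, y - x⟫ ≤ ε * ‖y - x‖}

/-- The limiting normal cone to `Q` at `x`. -/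
def limitingNormalCone (Q : Set H) (x : H) : Set H :=
  {v | ∃ xs vs : ℕ → H, (∀ i, vs i ∈ frechetNormalCone Q (xs i)) ∧
        Tendsto xs atTop (𝓝 x) ∧ Tendsto vs atTop (𝓝 v)}

/-- `Q` is locally closed at `x`. -/
def LocallyClosedAt (Q : Set H) (x : H) : Prop :=
  ∃ ε > (0:ℝ), IsClosed (Q ∩ closedBall x ε)

/-- `x` is the unique nearest point of `S` to `p`. -/
def IsUniqueNearestPt (S : Set H) (p x : H) : Prop :=
  x ∈ S ∧ ∀ y ∈ S, y ≠ x → dist p x < dist p y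

/-- `Q` is prox-regular at `xb` for `vb`. -/
def ProxRegularAt (Q : Set H) (xb vb : H) : Prop :=
  LocallyClosedAt Q xb ∧ ∃ ε > (0:ℝ), ∃ r > (0:ℝ), ∀ x ∈ Q,
    ∀ v ∈ limitingNormalCone Q x, dist x xb < ε → dist v vb < ε →
      IsUniqueNearestPt (Q ∩ closedBall xb ε) (x + r⁻¹ • v) x

/-- `Q` is Clarke regular at `x`. -/
def ClarkeRegularAt (Q : Set H) (x : H) : Prop :=
  LocallyClosedAt Q x ∧ limitingNormalCone Q x = frechetNormalCone Q x

/-- `M` is identifiable relative to the set `Q` at `xb` for `vb ∈ N_Q(xb)`: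
the graph of the limiting normal cone mapping is contained in `M × H` locally
around `(xb, vb)`. -/
def IdentifiableIn (Q M : Set H) (xb vb : H) : Prop :=
  ∃ W ∈ 𝓝 (xb, vb), ∀ p : H × H, p ∈ W → p.1 ∈ Q → p.2 ∈ limitingNormalCone Q p.1 → p.1 ∈ M

/-- `M` is a locally minimal identifiable set relative to the set `Q` at `xb` for `vb`. -/
def LocallyMinimalIdentifiableIn (Q M : Set H) (xb vb : H) : Prop :=
  IdentifiableIn Q M xb vb ∧ ∀ M' : Set H, IdentifiableIn Q M' xb vb → LocallyIncl M M' xb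

/-- The (Bouligand) tangent cone to `Q` at `xb`. -/
def tangentConeB (Q : Set H) (xb : H) : Set H :=
  {w | ∃ (xs : ℕ → H) (ts : ℕ → ℝ), (∀ i, xs i ∈ Q) ∧ (∀ i, 0 < ts i) ∧
      Tendsto ts atTop (𝓝 0) ∧ Tendsto xs atTop (𝓝 xb) ∧
      Tendsto (fun i => (ts i)⁻¹ • (xs i - xb)) atTop (𝓝 w)}

/-- The set of nearest points of `Q` to `y`. -/
def nearestPts (Q : Set H) (y : H) : Set H := {z | z ∈ Q ∧ ∀ w ∈ Q, dist y z ≤ dist y w}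

/-- A tangent vector `w ∈ T_Q(xb)` is smoothly derivable. -/
def SmoothlyDerivableVec (Q : Set H) (xb w : H) : Prop :=
  ∃ ε > (0:ℝ), ∃ γ : ℝ → H, ContDiffOn ℝ 1 γ (Ico (0:ℝ) ε) ∧ γ 0 = xb ∧
    (∀ t ∈ Ico (0:ℝ) ε, γ t ∈ Q) ∧
    Tendsto (fun t => t⁻¹ • (γ t - xb)) (𝓝[>] (0:ℝ)) (𝓝 w)

/-- `Q` is smoothly derivable at `xb`: every tangent vector is smoothly derivable. -/
def SmoothlyDerivableAt (Q : Set H) (xb : H) : Prop :=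
  ∀ w ∈ tangentConeB Q xb, SmoothlyDerivableVec Q xb w

/-- The normal cone of convex analysis. -/
def convNormalCone (C : Set H) (x : H) : Set H := {v | ∀ y ∈ C, ⟪v, y - x⟫ ≤ 0}

/-- The tangent cone of convex analysis. -/
def convTangentCone (C : Set H) (x : H) : Set H :=
  closure {w | ∃ l : ℝ, 0 ≤ l ∧ ∃ y ∈ C, w = l • (y - x)}

/-- A convex polyhedron: a finite intersection of closed halfspaces. -/
def IsPolyhedron (Q : Set H) : Prop :=
  ∃ (k : ℕ) (a : Fin k → H) (b : Fin k → ℝ), Q = {x | ∀ i, ⟪a i, x⟫ ≤ b i}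

/-- The relative interior of a set: interior relative to its affine span. -/
def relInterior (S : Set H) : Set H :=
  {v | v ∈ S ∧ ∃ ε > (0:ℝ), ∀ y ∈ (affineSpan ℝ S : Set H), dist y v < ε → y ∈ S}

/-- Inner semicontinuity at `xb` of a set-valued map restricted to `S`. -/
def InnerSemicontinuousOnAt (T : H → Set H') (S : Set H) (xb : H) : Prop :=
  ∀ xs : ℕ → H, (∀ i, xs i ∈ S) → Tendsto xs atTop (𝓝 xb) →
    ∀ w ∈ T xb, ∃ ws : ℕ → H', (∀ i, ws i ∈ T (xs i)) ∧ Tendsto ws atTop (𝓝 w)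

/-- `M` is a `C²` submanifold of the ambient space around the point `xb`. -/
def IsC2SubmanifoldAround (M : Set H) (xb : H) : Prop :=
  ∃ (m : ℕ) (F : H → EuclideanSpace ℝ (Fin m)) (U : Set H), IsOpen U ∧ xb ∈ U ∧
    ContDiffOn ℝ 2 F U ∧ Function.Surjective (fderiv ℝ F xb) ∧
    M ∩ U = {x ∈ U | F x = 0}

/-- `Q` is partly smooth with respect to the manifold `M` at `xb` for `vb`. -/
def PartlySmoothAt (Q M : Set H) (xb vb : H) : Prop :=
  ProxRegularAt Q xb vb ∧
  (Submodule.span ℝ (frechetNormalCone Q xb) : Set H) = limitingNormalCone M xb ∧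
  ∃ V ∈ 𝓝 vb, InnerSemicontinuousOnAt (fun x => V ∩ limitingNormalCone Q x) M xb

/-- `ℝⁿ × ℝ` with the Euclidean (ℓ²) structure, hosting epigraphs. -/
abbrev PairL2 (H : Type*) [NormedAddCommGroup H] : Type _ := WithLp 2 (H × ℝ)

/-- Build a point of `PairL2 H` from its components. -/
def pmk (x : H) (r : ℝ) : PairL2 H := (WithLp.equiv 2 (H × ℝ)).symm (x, r)

/-- The epigraph of an extended-real-valued function. -/
def epigraph (f : H → EReal) : Set (PairL2 H) :=
  {p | f ((WithLp.equiv 2 (H × ℝ)) p).1 ≤ (((WithLp.equiv 2 (H × ℝ)) p).2 : EReal)}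

/-- The limiting subdifferential. -/
def limSubdiff (f : H → EReal) (x : H) : Set H :=
  {v | ∃ r : ℝ, f x = (r : EReal) ∧
      pmk v (-1) ∈ limitingNormalCone (epigraph f) (pmk x r)}

/-- The horizon subdifferential. -/
def horizonSubdiff (f : H → EReal) (x : H) : Set H :=
  {v | ∃ r : ℝ, f x = (r : EReal) ∧
      pmk v 0 ∈ limitingNormalCone (epigraph f) (pmk x r)}

/-- The proximal subdifferential. -/
def proxSubdiff (f : H → EReal) (x : H) : Set H :=
  {v | ∃ r : ℝ, f x = (r : EReal) ∧
      pmk v (-1) ∈ proxNormalCone (epigraph f) (pmk x r)}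

/-- A function is Clarke regular at `x` if its epigraph is Clarke regular at `(x, f x)`. -/
def ClarkeRegularFn (f : H → EReal) (x : H) : Prop :=
  ∃ r : ℝ, f x = (r : EReal) ∧ ClarkeRegularAt (epigraph f) (pmk x r)

/-- `M` is identifiable at `xb` for `vb` relative to the function `f` with
subdifferential mapping `D`: for every sequence `(xᵢ, f xᵢ, vᵢ) → (xb, f xb, vb)`
with `vᵢ ∈ D xᵢ`, the points `xᵢ` lie in `M` for all large `i`. -/
def IdentifiableFn (f : H → EReal) (D : H → Set H) (M : Set H) (xb vb : H) : Prop :=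
  ∀ xs vs : ℕ → H, Tendsto xs atTop (𝓝 xb) →
    Tendsto (fun i => f (xs i)) atTop (𝓝 (f xb)) →
    Tendsto vs atTop (𝓝 vb) → (∀ i, vs i ∈ D (xs i)) →
    ∀ᶠ i in atTop, xs i ∈ M

/-- `M` is a locally minimal identifiable set relative to `f` (with subdifferential `D`). -/
def LocallyMinimalIdentifiableFn (f : H → EReal) (D : H → Set H) (M : Set H)
    (xb vb : H) : Prop :=
  IdentifiableFn f D M xb vb ∧ ∀ M' : Set H, IdentifiableFn f D M' xb vb → LocallyIncl M M' xb

/-- The subdifferential of convex analysis for an extended-real-valued function. -/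
def convexSubdiff (f : H → EReal) (x : H) : Set H :=
  {v | ∃ r : ℝ, f x = (r : EReal) ∧ ∀ y : H, ((r + ⟪v, y - x⟫ : ℝ) : EReal) ≤ f y}

/-- Convexity for an extended-real-valued function. -/
def ERealConvexOn (f : H → EReal) : Prop :=
  ∀ x y : H, ∀ a b : ℝ, 0 ≤ a → 0 ≤ b → a + b = 1 →
    f (a • x + b • y) ≤ (a : EReal) * f x + (b : EReal) * f y

/-- A piecewise linear-quadratic function: its domain is the union of finitely many
convex polyhedra, on each of which it agrees with a polynomial of degree at most 2. -/
def IsPiecewiseLinearQuadratic (f : H → EReal) : Prop :=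
  ∃ (k : ℕ) (C : Fin k → Set H), (∀ i, IsPolyhedron (C i)) ∧
    ({x | f x ≠ ⊤} = ⋃ i, C i) ∧
    ∀ i, ∃ (B : H →ₗ[ℝ] H →ₗ[ℝ] ℝ) (l : H →ₗ[ℝ] ℝ) (c : ℝ),
      ∀ x ∈ C i, f x = ((B x x + l x + c : ℝ) : EReal)


/-- Outer semicontinuity of a set-valued mapping (at every point). -/
def OuterSemicontinuousSV (G : H → Set H') : Prop :=
  ∀ (x : H) (v : H') (xs : ℕ → H) (vs : ℕ → H'),
    Tendsto xs atTop (𝓝 x) → Tendsto vs atTop (𝓝 v) →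
    (∀ i, vs i ∈ G (xs i)) → v ∈ G x

end Defs

section Aux

variable {E : Type*} [NormedAddCommGroup E] [InnerProductSpace ℝ E]

lemma frechet_subset_limiting {Q : Set E} {x v : E} (h : v ∈ frechetNormalCone Q x) :
    v ∈ limitingNormalCone Q x :=
  ⟨fun _ => x, fun _ => v, fun _ => h, tendsto_const_nhds, tendsto_const_nhds⟩

lemma frechet_mono {M Q : Set E} (hMQ : M ⊆ Q) {x v : E} (hxM : x ∈ M)
    (h : v ∈ frechetNormalCone Q x) : v ∈ frechetNormalCone M x := by
  refine ⟨hxM, fun ε hε => ?_⟩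
  obtain ⟨δ, hδ, hd⟩ := h.2 ε hε
  exact ⟨δ, hδ, fun y hy => hd y (hMQ hy)⟩

/-- a quadratic bound on inner products gives a Fréchet normal. -/
lemma quad_frechet {Q : Set E} {z w : E} (hz : z ∈ Q) (ρ : ℝ) (hρ : 0 < ρ)
    (h : ∀ y ∈ Q, ⟪w, y - z⟫ ≤ (ρ/2) * ‖y - z‖^2) : w ∈ frechetNormalCone Q z := by
  refine ⟨hz, fun ε hε => ?_⟩
  refine ⟨2*ε/ρ, by positivity, fun y hy hd => ?_⟩
  have h1 := h y hy
  have h2 : ‖y - z‖ ≤ 2*ε/ρ := by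
    rw [dist_eq_norm] at hd; linarith
  have h3 : ρ * (2*ε/ρ) = 2*ε := by field_simp
  nlinarith [mul_le_mul_of_nonneg_right h2 (norm_nonneg (y - z)), norm_nonneg (y - z), sq_abs (‖y-z‖)]

end Aux

section Aux2

variable {E : Type*} [NormedAddCommGroup E] [InnerProductSpace ℝ E]

/-- nearest point gives a quadratic inner-product bound. -/
lemma nearest_quad {Q : Set E} {p z : E} (h : ∀ y ∈ Q, dist p z ≤ dist p y) :
    ∀ y ∈ Q, ⟪p - z, y - z⟫ ≤ (1/2) * ‖y - z‖^2 := by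
  intro y hy
  have h1 := h y hy
  have h2 : ‖p - z‖^2 ≤ ‖p - y‖^2 := by
    rw [dist_eq_norm, dist_eq_norm] at h1
    exact pow_le_pow_left₀ (norm_nonneg _) h1 2
  have h3 : p - y = (p - z) - (y - z) := by abel
  have h4 : ‖(p - z) - (y - z)‖^2 = ‖p - z‖^2 - 2 * ⟪p - z, y - z⟫ + ‖y - z‖^2 :=
    norm_sub_sq_real _ _
  rw [h3] at h2
  linarith

/-- scaled nearest-point vector is a Fréchet normal. -/
lemma nearest_frechet {Q : Set E} {p z : E} (hz : z ∈ Q) (h : ∀ y ∈ Q, dist p z ≤ dist p y)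
    (lam : ℝ) (hlam : 0 < lam) : lam • (p - z) ∈ frechetNormalCone Q z := by
  refine quad_frechet hz lam hlam (fun y hy => ?_)
  have := nearest_quad h y hy
  rw [real_inner_smul_left]
  nlinarith

/-- strict nearest-point comparison in inner-product form. -/
lemma strict_nearest_inner {x y v : E} {c : ℝ} (hc : 0 < c)
    (h : dist (x + c • v) x < dist (x + c • v) y) :
    2 * c * ⟪v, y - x⟫ < ‖y - x‖^2 := by
  have e1 : dist (x + c • v) x = ‖c • v‖ := by
    rw [dist_eq_norm]; congr 1; abel
  have e2 : dist (x + c • v) y = ‖c • v - (y - x)‖ := by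
    rw [dist_eq_norm]; congr 1; abel
  rw [e1, e2] at h
  have h2 : ‖c • v‖^2 < ‖c • v - (y - x)‖^2 := by
    have := norm_nonneg (c • v)
    nlinarith [norm_nonneg (c • v - (y - x))]
  rw [norm_sub_sq_real, real_inner_smul_left] at h2
  linarith

/-- unique nearest point persists along the segment (moving closer). -/
lemma unique_nearest_shrink {S : Set E} {x v : E} {s t : ℝ} (hs : 0 < s) (hst : s ≤ t)
    (h : IsUniqueNearestPt S (x + s⁻¹ • v) x) : IsUniqueNearestPt S (x + t⁻¹ • v) x := by
  obtain ⟨hxS, h⟩ := h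
  have ht : 0 < t := lt_of_lt_of_le hs hst
  refine ⟨hxS, fun y hy hyx => ?_⟩
  have h1 := h y hy hyx
  set q := x + s⁻¹ • v
  set p := x + t⁻¹ • v
  have hqp : dist q p = (s⁻¹ - t⁻¹) * ‖v‖ := by
    rw [dist_eq_norm]
    have : q - p = (s⁻¹ - t⁻¹) • v := by
      simp only [q, p, sub_smul]; abel
    rw [this, norm_smul, Real.norm_eq_abs, abs_of_nonneg]
    have := inv_anti₀ hs hst
    linarith
  have hpx : dist p x = t⁻¹ * ‖v‖ := by
    rw [dist_eq_norm]
    have : p - x = t⁻¹ • v := by simp only [p]; abel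
    rw [this, norm_smul, Real.norm_eq_abs, abs_of_nonneg (le_of_lt (inv_pos.2 ht))]
  have hqx : dist q x = s⁻¹ * ‖v‖ := by
    rw [dist_eq_norm]
    have : q - x = s⁻¹ • v := by simp only [q]; abel
    rw [this, norm_smul, Real.norm_eq_abs, abs_of_nonneg (le_of_lt (inv_pos.2 hs))]
  have h2 : dist q y ≤ dist q p + dist p y := dist_triangle _ _ _
  rw [hpx]
  rw [hqx] at h1
  rw [hqp] at h2
  linarith

end Aux2

section Aux3

variable {E : Type*} [NormedAddCommGroup E] [InnerProductSpace ℝ E]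

lemma mem_of_limiting_closed {M : Set E} {xb : E} {εc : ℝ}
    (hclosed : IsClosed (M ∩ closedBall xb εc)) {x v : E}
    (hv : v ∈ limitingNormalCone M x) (hx : dist x xb < εc/2) (hεc : 0 < εc) : x ∈ M := by
  obtain ⟨xs, vs, hfr, hxs, hvs⟩ := hv
  have hmem : ∀ᶠ i in atTop, xs i ∈ M ∩ closedBall xb εc := by
    filter_upwards [hxs (Metric.ball_mem_nhds x (by linarith : (0:ℝ) < εc/2))] with i hi
    refine ⟨(hfr i).1, ?_⟩
    have hi2 : dist (xs i) x < εc/2 := hi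
    rw [Metric.mem_closedBall]
    calc dist (xs i) xb ≤ dist (xs i) x + dist x xb := dist_triangle _ _ _
      _ ≤ εc := by linarith [hi2]
  exact hclosed.mem_of_tendsto hxs hmem |>.1

lemma window_mem {Q M : Set E} (hMQ : M ⊆ Q) {xb vb : E} {δW : ℝ}
    (hW : ∀ z w : E, z ∈ Q → w ∈ limitingNormalCone Q z → dist z xb < δW → dist w vb < δW → z ∈ M)
    {εc : ℝ} (hεc : 0 < εc) (hclosed : IsClosed (M ∩ closedBall xb εc))
    {x v : E} (hv : v ∈ limitingNormalCone Q x)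
    (hx1 : dist x xb < δW/2) (hx2 : dist x xb < εc/2) (hvd : dist v vb < δW/2)
    (hδW : 0 < δW) : x ∈ M ∧ v ∈ limitingNormalCone M x := by
  obtain ⟨xs, vs, hfr, hxs, hvs⟩ := hv
  have h1 : ∀ᶠ i in atTop, dist (xs i) x < min (δW/2) (εc/2) ∧ dist (vs i) v < δW/2 := by
    filter_upwards [hxs (Metric.ball_mem_nhds x (show (0:ℝ) < min (δW/2) (εc/2) by positivity)),
      hvs (Metric.ball_mem_nhds v (by linarith : (0:ℝ) < δW/2))] with i hi hi'
    exact ⟨hi, hi'⟩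
  obtain ⟨N, hN⟩ := eventually_atTop.1 h1
  have hxsM : ∀ i ≥ N, xs i ∈ M := by
    intro i hi
    obtain ⟨ha, hb⟩ := hN i hi
    refine hW (xs i) (vs i) (hfr i).1 (frechet_subset_limiting (hfr i)) ?_ ?_
    · calc dist (xs i) xb ≤ dist (xs i) x + dist x xb := dist_triangle _ _ _
        _ < δW := by have := lt_of_lt_of_le ha (min_le_left _ _); linarith
    · calc dist (vs i) vb ≤ dist (vs i) v + dist v vb := dist_triangle _ _ _
        _ < δW := by linarith
  have hxM : x ∈ M := by
    have hmem : ∀ᶠ i in atTop, xs i ∈ M ∩ closedBall xb εc := by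
      rw [eventually_atTop]
      refine ⟨N, fun i hi => ⟨hxsM i hi, ?_⟩⟩
      have := lt_of_lt_of_le (hN i hi).1 (min_le_right _ _)
      rw [Metric.mem_closedBall]
      calc dist (xs i) xb ≤ dist (xs i) x + dist x xb := dist_triangle _ _ _
        _ ≤ εc := by linarith
    exact (hclosed.mem_of_tendsto hxs hmem).1
  refine ⟨hxM, fun i => xs (i + N), fun i => vs (i + N), fun i => ?_, ?_, ?_⟩
  · exact frechet_mono hMQ (hxsM (i + N) (Nat.le_add_left _ _)) (hfr (i + N))
  · exact (tendsto_add_atTop_iff_nat N).2 hxs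
  · exact (tendsto_add_atTop_iff_nat N).2 hvs

end Aux3

section Aux4

variable {E : Type*} [NormedAddCommGroup E] [InnerProductSpace ℝ E]

lemma dist_add_smul_self (x v : E) (t : ℝ) (ht : 0 ≤ t) : dist (x + t • v) x = t * ‖v‖ := by
  rw [dist_eq_norm]
  have h : x + t • v - x = t • v := by abel
  rw [h, norm_smul, Real.norm_eq_abs, abs_of_nonneg ht]

lemma norm_le_of_dist {v vb : E} {ε : ℝ} (h : dist v vb < ε) : ‖v‖ ≤ ‖vb‖ + ε := by
  have h1 := dist_triangle v vb 0
  rw [dist_zero_right, dist_zero_right] at h1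
  linarith

lemma zero_mem_frechet {Q : Set E} {z : E} (hz : z ∈ Q) : (0:E) ∈ frechetNormalCone Q z := by
  refine ⟨hz, fun ε hε => ⟨1, one_pos, fun y hy _ => ?_⟩⟩
  rw [inner_zero_left]
  positivity

end Aux4

section Aux5

variable {E : Type*} [NormedAddCommGroup E] [InnerProductSpace ℝ E]

/-- if the whole ray through `u` avoids the ball around `vb`, the inner product is small. -/
lemma ray_avoid_ball (vb u : E) {δW c : ℝ} (hδW : 0 < δW) (hc0 : 0 ≤ c)
    (hc2 : c^2 = ‖vb‖^2 - δW^2)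
    (hfar : ∀ lam : ℝ, 0 < lam → δW ≤ ‖lam • u - vb‖) : ⟪vb, u⟫ ≤ c * ‖u‖ := by
  by_cases hu : u = 0
  · rw [hu, inner_zero_right, norm_zero, mul_zero]
  · have hnu : 0 < ‖u‖ := norm_pos_iff.2 hu
    rcases le_or_gt ⟪vb, u⟫ 0 with ha | ha
    · exact le_trans ha (by positivity)
    · have hlam : 0 < ⟪vb, u⟫/‖u‖^2 := div_pos ha (by positivity)
      have h1 := hfar _ hlam
      have h2 : δW^2 ≤ ‖(⟪vb, u⟫/‖u‖^2) • u - vb‖^2 := pow_le_pow_left₀ hδW.le h1 2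
      have h3 : ‖(⟪vb, u⟫/‖u‖^2) • u - vb‖^2
          = (⟪vb, u⟫/‖u‖^2)^2*‖u‖^2 - 2*((⟪vb, u⟫/‖u‖^2)*⟪vb, u⟫) + ‖vb‖^2 := by
        have hcomm : ⟪u, vb⟫ = ⟪vb, u⟫ := real_inner_comm vb u
        rw [norm_sub_sq_real, real_inner_smul_left, hcomm, norm_smul,
          Real.norm_eq_abs, abs_of_pos hlam]
        ring
      have hne : ‖u‖ ≠ 0 := ne_of_gt hnu
      have h4 : (⟪vb, u⟫/‖u‖^2)^2*‖u‖^2 = ⟪vb, u⟫^2/‖u‖^2 := by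
        field_simp
      have h5 : (⟪vb, u⟫/‖u‖^2)*⟪vb, u⟫ = ⟪vb, u⟫^2/‖u‖^2 := by
        field_simp
      have h6 : ⟪vb, u⟫^2/‖u‖^2 ≤ c^2 := by
        rw [h3, h4, h5] at h2
        linarith
      have h7 : ⟪vb, u⟫^2 ≤ c^2*‖u‖^2 := by
        rw [div_le_iff₀ (by positivity)] at h6
        linarith
      nlinarith [mul_nonneg hc0 hnu.le, sq_nonneg (c*‖u‖ - ⟪vb, u⟫), sq_nonneg (c*‖u‖ + ⟪vb, u⟫)]

end Aux5

/-- the purely arithmetic contradiction in the hard case. -/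
lemma contra_aux (K ε rM c m δ nvb ri IP I1 I2 I3 I4 I5 I6 nz npz : ℝ)
    (hK : K = 16*(nvb+1)) (hε0 : 0 < ε) (hε1 : ε ≤ 1) (hrM : 0 < rM)
    (hc0 : 0 ≤ c) (hm : m = nvb^2 - c*nvb) (hm0 : 0 < m) (hδ : δ = m/(16*K))
    (hriK : ri*K = ε) (hri0 : 0 ≤ ri) (hnvb : 0 ≤ nvb)
    (hεD : ε * (8*((rM/2+1)*K + nvb + c + 1)) ≤ m)
    (i1 : IP = I1 + I2) (i2 : IP = I3 + ri*I4) (i3 : I3 = I5 + I6)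
    (hfz : I1 ≤ δ*nz) (hnz0 : 0 ≤ nz) (hnz : nz ≤ 2*ε)
    (hci : I2 ≤ c*npz) (hnpz0 : 0 ≤ npz) (hnpz : npz ≤ ri*(nvb+ε))
    (b1 : I5 ≥ -((rM/2)*ε^2)) (b2 : I6 ≥ -(ε*ε)) (b3 : I4 ≥ nvb^2 - nvb*ε) : False := by
  have hK0 : (0:ℝ) < K := by rw [hK]; linarith
  have hδK : δ*K = m/16 := by rw [hδ]; field_simp
  have hδ0 : 0 ≤ δ := by rw [hδ]; exact div_nonneg hm0.le (by linarith)
  have s1' : I1 ≤ δ*(2*ε) := le_trans hfz (mul_le_mul_of_nonneg_left hnz hδ0)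
  have s2' : I2 ≤ c*(ri*(nvb+ε)) := le_trans hci (mul_le_mul_of_nonneg_left hnpz hc0)
  have s1 : K*I1 ≤ K*(δ*(2*ε)) := mul_le_mul_of_nonneg_left s1' hK0.le
  have s2 : K*I2 ≤ K*(c*(ri*(nvb+ε))) := mul_le_mul_of_nonneg_left s2' hK0.le
  have t1 : K*(δ*(2*ε)) = (m/16)*(2*ε) := by
    rw [show K*(δ*(2*ε)) = (δ*K)*(2*ε) from by ring, hδK]
  have t2 : K*(c*(ri*(nvb+ε))) = c*(ε*(nvb+ε)) := by
    rw [show K*(c*(ri*(nvb+ε))) = c*((ri*K)*(nvb+ε)) from by ring, hriK]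
  have i1K : K*IP = K*I1 + K*I2 := by rw [i1]; ring
  have hup : K*IP ≤ (m/16)*(2*ε) + c*(ε*(nvb+ε)) := by linarith
  have i2K : K*IP = K*I3 + ε*I4 := by rw [i2, ← hriK]; ring
  have i3K : K*I3 = K*I5 + K*I6 := by rw [i3]; ring
  have u1 : K*I5 ≥ K*(-((rM/2)*ε^2)) := mul_le_mul_of_nonneg_left b1 hK0.le
  have u2 : K*I6 ≥ K*(-(ε*ε)) := mul_le_mul_of_nonneg_left b2 hK0.le
  have u3 : ε*I4 ≥ ε*(nvb^2 - nvb*ε) := mul_le_mul_of_nonneg_left b3 hε0.le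
  have hlow : K*(-((rM/2)*ε^2) - ε*ε) + ε*(nvb^2 - nvb*ε) ≤ K*IP := by linarith
  have hAB : ε * (nvb^2 - nvb*ε - K*((rM/2)*ε + ε)) ≤ ε * (m/16*2 + c*(nvb+ε)) := by
    linarith
  have hdiv : nvb^2 - nvb*ε - K*((rM/2)*ε + ε) ≤ m/16*2 + c*(nvb+ε) :=
    (mul_le_mul_iff_right₀ hε0).1 hAB
  linarith

set_option maxHeartbeats 2000000 in
/-- prox-regularity of an identifiable set is inherited by the whole set. -/
theorem statement9 {n : ℕ} (Q : Set (Euc n)) (hQ : IsClosed Q)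
    (M : Set (Euc n)) (hMQ : M ⊆ Q) (xb vb : Euc n)
    (hvb : vb ∈ frechetNormalCone Q xb) (hvbM : vb ∈ limitingNormalCone M xb)
    (hid : IdentifiableIn Q M xb vb) (hprox : ProxRegularAt M xb vb) :
    ProxRegularAt Q xb vb := by
  classical
  obtain ⟨⟨εc, hεc, hclosed⟩, εM, hεM, rM, hrM, HM⟩ := hprox
  obtain ⟨W, hWnhds, hWin⟩ := hid
  obtain ⟨δW, hδW, hball⟩ := Metric.mem_nhds_iff.1 hWnhds
  -- the identifiability window, in metric form
  have hW : ∀ z w : Euc n, z ∈ Q → w ∈ limitingNormalCone Q z →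
      dist z xb < δW → dist w vb < δW → z ∈ M := by
    intro z w hz hw h1 h2
    refine hWin (z, w) (hball ?_) hz hw
    rw [Metric.mem_ball, Prod.dist_eq]
    exact max_lt h1 h2
  have hxbM : xb ∈ M :=
    mem_of_limiting_closed hclosed hvbM (by rw [dist_self]; linarith) hεc
  set K : ℝ := 16 * (‖vb‖ + 1) with hK
  have hKpos : 0 < K := by positivity
  -- main claim : a choice of ε and r such that nearest points of Q lie in M
  have main : ∃ ε r : ℝ, 0 < ε ∧ ε ≤ 1 ∧ ε ≤ δW/4 ∧ ε ≤ εM/2 ∧ ε ≤ εc/2 ∧ rM ≤ r ∧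
      r * ε = K ∧
      (∀ x v z : Euc n, x ∈ Q → v ∈ limitingNormalCone Q x → dist x xb < ε →
        dist v vb < ε → z ∈ Q →
        (∀ q ∈ Q, dist (x + r⁻¹ • v) z ≤ dist (x + r⁻¹ • v) q) →
        dist z xb < 9*ε/8 → z ∈ M) := by
    have hεne : ∀ e : ℝ, 0 < e → (K/e) * e = K := by
      intro e he; field_simp
    have hrMle : ∀ e : ℝ, 0 < e → e ≤ K/(rM+1) → rM ≤ K/e := by
      intro e he hle
      rw [le_div_iff₀ he]
      have h2 := (le_div_iff₀ (show (0:ℝ) < rM+1 by linarith)).1 hle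
      nlinarith
    by_cases hcase : ‖vb‖ < δW
    · -- easy case : all small normals are within the window
      obtain ⟨ε, hε0, hεa, hεb, hεc2, hεd, hεe⟩ :
          ∃ ε:ℝ, 0 < ε ∧ ε ≤ 1 ∧ ε ≤ δW/4 ∧ ε ≤ εM/2 ∧ ε ≤ εc/2 ∧ ε ≤ K/(rM+1) := by
        refine ⟨min 1 (min (δW/4) (min (εM/2) (min (εc/2) (K/(rM+1))))), ?_, min_le_left _ _,
          le_trans (min_le_right _ _) (min_le_left _ _),
          le_trans (min_le_right _ _) (le_trans (min_le_right _ _) (min_le_left _ _)),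
          le_trans (min_le_right _ _) (le_trans (min_le_right _ _)
            (le_trans (min_le_right _ _) (min_le_left _ _))),
          le_trans (min_le_right _ _) (le_trans (min_le_right _ _)
            (le_trans (min_le_right _ _) (min_le_right _ _)))⟩
        refine lt_min one_pos (lt_min (by linarith) (lt_min (by linarith) (lt_min (by linarith)
          (div_pos hKpos (by linarith)))))
      refine ⟨ε, K/ε, hε0, hεa, hεb, hεc2, hεd, hrMle ε hε0 hεe, hεne ε hε0, ?_⟩
      intro x v z hxQ hv hxd hvd hzQ hglob hzxb
      set r := K/ε with hrdef
      set p := x + r⁻¹ • v with hp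
      have hzδW : dist z xb < δW := by linarith
      by_cases hpz : p = z
      · refine hW z 0 hzQ (frechet_subset_limiting (zero_mem_frechet hzQ)) hzδW ?_
        rw [dist_eq_norm, zero_sub, norm_neg]
        exact hcase
      · have hd0 : 0 < dist p z := dist_pos.2 hpz
        set lam := (δW - ‖vb‖)/(2*dist p z) with hlamdef
        have hlam : 0 < lam := div_pos (by linarith) (by linarith)
        have hwn : ‖lam • (p - z)‖ = (δW - ‖vb‖)/2 := by
          rw [norm_smul, Real.norm_eq_abs, abs_of_pos hlam, ← dist_eq_norm, hlamdef]
          field_simp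
        refine hW z (lam • (p - z)) hzQ
          (frechet_subset_limiting (nearest_frechet hzQ hglob lam hlam)) hzδW ?_
        have h1 : dist (lam • (p - z)) vb ≤ ‖lam • (p - z)‖ + ‖vb‖ := by
          rw [dist_eq_norm]; exact norm_sub_le _ _
        rw [hwn] at h1
        linarith
    · -- hard case : ‖vb‖ ≥ δW
      push_neg at hcase
      obtain ⟨c, hc0, hc2⟩ : ∃ c:ℝ, 0 ≤ c ∧ c^2 = ‖vb‖^2 - δW^2 :=
        ⟨Real.sqrt (‖vb‖^2 - δW^2), Real.sqrt_nonneg _, Real.sq_sqrt (by nlinarith)⟩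
      have hcvb : c < ‖vb‖ := by nlinarith [sq_nonneg (c + ‖vb‖), norm_nonneg vb]
      obtain ⟨m, hmdef⟩ : ∃ m:ℝ, m = ‖vb‖^2 - c*‖vb‖ := ⟨_, rfl⟩
      have hm0 : 0 < m := by rw [hmdef]; nlinarith
      obtain ⟨δ, hδdef⟩ : ∃ d:ℝ, d = m/(16*K) := ⟨_, rfl⟩
      have hδ0 : 0 < δ := by rw [hδdef]; exact div_pos hm0 (by positivity)
      obtain ⟨ρ, hρ0, hfre⟩ := hvb.2 δ hδ0
      obtain ⟨D, hDdef⟩ : ∃ d:ℝ, d = 8*((rM/2+1)*K + ‖vb‖ + c + 1) := ⟨_, rfl⟩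
      have hD0 : 0 < D := by rw [hDdef]; nlinarith [hKpos, hrM, hc0, norm_nonneg vb]
      obtain ⟨ε, hε0, hεa, hεb, hεc2, hεd, hεe, hερ, hεD⟩ :
          ∃ ε:ℝ, 0 < ε ∧ ε ≤ 1 ∧ ε ≤ δW/4 ∧ ε ≤ εM/2 ∧ ε ≤ εc/2 ∧ ε ≤ K/(rM+1) ∧
            ε ≤ ρ/2 ∧ ε ≤ m/D := by
        refine ⟨min 1 (min (δW/4) (min (εM/2) (min (εc/2) (min (K/(rM+1)) (min (ρ/2) (m/D)))))),
          ?_, min_le_left _ _,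
          le_trans (min_le_right _ _) (min_le_left _ _),
          le_trans (min_le_right _ _) (le_trans (min_le_right _ _) (min_le_left _ _)),
          le_trans (min_le_right _ _) (le_trans (min_le_right _ _)
            (le_trans (min_le_right _ _) (min_le_left _ _))),
          le_trans (min_le_right _ _) (le_trans (min_le_right _ _)
            (le_trans (min_le_right _ _) (le_trans (min_le_right _ _) (min_le_left _ _)))),
          le_trans (min_le_right _ _) (le_trans (min_le_right _ _)
            (le_trans (min_le_right _ _) (le_trans (min_le_right _ _)
              (le_trans (min_le_right _ _) (min_le_left _ _))))),
          le_trans (min_le_right _ _) (le_trans (min_le_right _ _)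
            (le_trans (min_le_right _ _) (le_trans (min_le_right _ _)
              (le_trans (min_le_right _ _) (min_le_right _ _)))))⟩
        refine lt_min one_pos (lt_min (by linarith) (lt_min (by linarith) (lt_min (by linarith)
          (lt_min (div_pos hKpos (by linarith)) (lt_min (by linarith) (div_pos hm0 hD0))))))
      have hεm : ε * D ≤ m := (le_div_iff₀ hD0).1 hεD
      refine ⟨ε, K/ε, hε0, hεa, hεb, hεc2, hεd, hrMle ε hε0 hεe, hεne ε hε0, ?_⟩
      intro x v z hxQ hv hxd hvd hzQ hglob hzxb
      set r := K/ε with hrdef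
      have hr0 : 0 < r := div_pos hKpos hε0
      have hri0 : (0:ℝ) ≤ r⁻¹ := inv_nonneg.2 hr0.le
      have hriK : r⁻¹ * K = ε := by rw [hrdef, inv_div]; field_simp
      set p := x + r⁻¹ • v with hp
      by_contra hzM
      -- every positive multiple of p - z is a normal avoiding the window
      have hfar : ∀ lam : ℝ, 0 < lam → δW ≤ ‖lam • (p - z) - vb‖ := by
        intro lam hlam
        by_contra hcon
        push_neg at hcon
        rw [← dist_eq_norm] at hcon
        exact hzM (hW z (lam • (p - z)) hzQ
          (frechet_subset_limiting (nearest_frechet hzQ hglob lam hlam)) (by linarith) hcon)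
      have hcineq : ⟪vb, p - z⟫ ≤ c * ‖p - z‖ := ray_avoid_ball vb (p - z) hδW hc0 hc2 hfar
      -- x lies in M and v is a limiting normal to M there
      have hxM : x ∈ M ∧ v ∈ limitingNormalCone M x :=
        window_mem hMQ hW hεc hclosed hv (by linarith) (by linarith) (by linarith) hδW
      -- comparison with the base point xb in M
      have hxbar : ⟪v, xb - x⟫ ≤ (rM/2)*‖xb - x‖^2 := by
        by_cases hxxb : xb = x
        · rw [hxxb, sub_self, inner_zero_right, norm_zero]
          simp
        · have h1 := (HM x hxM.1 v hxM.2 (by linarith) (by linarith)).2 xb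
            ⟨hxbM, by rw [Metric.mem_closedBall, dist_self]; linarith⟩ hxxb
          have h2 := strict_nearest_inner (inv_pos.2 hrM) h1
          have h3 : rM/2*(2*rM⁻¹*⟪v, xb - x⟫) = ⟪v, xb - x⟫ := by
            have hrMne : rM ≠ 0 := ne_of_gt hrM
            field_simp
          have h4 := mul_lt_mul_of_pos_left h2 (show (0:ℝ) < rM/2 by linarith)
          rw [h3] at h4
          linarith
      -- Fréchet normal inequality at z
      have hzρ : dist z xb < ρ := by linarith
      have hfz : ⟪vb, z - xb⟫ ≤ δ * ‖z - xb‖ := hfre z hzQ hzρ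
      -- basic norms and bounds
      have hd2 : ‖x - xb‖ ≤ ε := by
        rw [← dist_eq_norm]; exact hxd.le
      have hd2' : ‖xb - x‖ ≤ ε := by rw [norm_sub_rev]; exact hd2
      have b4 : ‖z - xb‖ ≤ 2*ε := by
        rw [← dist_eq_norm]; linarith
      have hpxeq : dist p x = r⁻¹ * ‖v‖ := dist_add_smul_self x v r⁻¹ hri0
      have hnvε : ‖v‖ ≤ ‖vb‖ + ε := norm_le_of_dist hvd
      have b5 : ‖p - z‖ ≤ r⁻¹*(‖vb‖+ε) := by
        have h1 : dist p z ≤ dist p x := hglob x hxQ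
        rw [← dist_eq_norm]
        rw [hpxeq] at h1
        exact le_trans h1 (mul_le_mul_of_nonneg_left hnvε hri0)
      -- inner product identities
      have i1 : ⟪vb, p - xb⟫ = ⟪vb, z - xb⟫ + ⟪vb, p - z⟫ := by
        rw [← inner_add_right]
        congr 1
        abel
      have i2 : ⟪vb, p - xb⟫ = ⟪vb, x - xb⟫ + r⁻¹ * ⟪vb, v⟫ := by
        rw [← real_inner_smul_right, ← inner_add_right]
        congr 1
        rw [hp]
        abel
      have i3 : ⟪vb, x - xb⟫ = ⟪v, x - xb⟫ + ⟪vb - v, x - xb⟫ := by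
        rw [← inner_add_left]
        congr 1
        abel
      -- lower bounds
      have b1 : ⟪v, x - xb⟫ ≥ -((rM/2)*ε^2) := by
        have h1 : ⟪v, x - xb⟫ = -⟪v, xb - x⟫ := by
          rw [← inner_neg_right]
          congr 1
          abel
        have h2 : (rM/2)*‖xb - x‖^2 ≤ (rM/2)*ε^2 :=
          mul_le_mul_of_nonneg_left (pow_le_pow_left₀ (norm_nonneg _) hd2' 2)
            (by linarith : (0:ℝ) ≤ rM/2)
        linarith
      have b2 : ⟪vb - v, x - xb⟫ ≥ -(ε*ε) := by
        have h1 := abs_real_inner_le_norm (vb - v) (x - xb)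
        have h2 := neg_abs_le (⟪vb - v, x - xb⟫)
        have hd1 : ‖vb - v‖ ≤ ε := by
          rw [← dist_eq_norm, dist_comm]; exact hvd.le
        have h3 : ‖vb - v‖ * ‖x - xb‖ ≤ ε * ε :=
          mul_le_mul hd1 hd2 (norm_nonneg _) hε0.le
        linarith
      have b3 : ⟪vb, v⟫ ≥ ‖vb‖^2 - ‖vb‖*ε := by
        have h1 : ⟪vb, v⟫ = ‖vb‖^2 + ⟪vb, v - vb⟫ := by
          rw [← real_inner_self_eq_norm_sq, ← inner_add_right]
          congr 1
          abel
        have h2 := abs_real_inner_le_norm vb (v - vb)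
        have h3 := neg_abs_le (⟪vb, v - vb⟫)
        have h4 : ‖v - vb‖ ≤ ε := by rw [← dist_eq_norm]; exact hvd.le
        have h5 : ‖vb‖ * ‖v - vb‖ ≤ ‖vb‖ * ε :=
          mul_le_mul_of_nonneg_left h4 (norm_nonneg vb)
        linarith
      have hεD' : ε * (8*((rM/2+1)*K + ‖vb‖ + c + 1)) ≤ m := by
        rw [← hDdef]; exact hεm
      exact contra_aux K ε rM c m δ ‖vb‖ r⁻¹ ⟪vb, p - xb⟫ ⟪vb, z - xb⟫ ⟪vb, p - z⟫
        ⟪vb, x - xb⟫ ⟪vb, v⟫ ⟪v, x - xb⟫ ⟪vb - v, x - xb⟫ ‖z - xb‖ ‖p - z‖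
        hK hε0 hεa hrM hc0 hmdef hm0 hδdef hriK hri0 (norm_nonneg vb) hεD'
        i1 i2 i3 hfz (norm_nonneg _) b4 hcineq (norm_nonneg _) b5 b1 b2 b3
  obtain ⟨ε, r, hε0, hε1, hεδW, hεεM, hεεc, hrMr, hrε, ZM⟩ := main
  have hr0 : 0 < r := by nlinarith
  have hrne : r ≠ 0 := ne_of_gt hr0
  have hrinvK : r⁻¹ * K = ε := by rw [← hrε]; field_simp
  refine ⟨⟨1, one_pos, (hQ.inter Metric.isClosed_closedBall)⟩, ε, hε0, r, hr0, ?_⟩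
  intro x hxQ v hv hxd hvd
  -- x belongs to M with v a limiting normal of M there
  have hxM : x ∈ M ∧ v ∈ limitingNormalCone M x := by
    refine window_mem hMQ hW hεc hclosed hv (by linarith) (by linarith) (by linarith) hδW
  -- unique nearest point property for M at scale r
  have huniq : IsUniqueNearestPt (M ∩ closedBall xb εM) (x + r⁻¹ • v) x := by
    refine unique_nearest_shrink hrM hrMr ?_
    exact HM x hxM.1 v hxM.2 (by linarith) (by linarith)
  set p := x + r⁻¹ • v with hp
  -- bound on dist p x
  have hnv : ‖v‖ ≤ ‖vb‖ + 1 := le_trans (norm_le_of_dist hvd) (by linarith)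
  have hpxeq : dist p x = r⁻¹ * ‖v‖ := dist_add_smul_self x v r⁻¹ (inv_nonneg.2 hr0.le)
  have hpx : dist p x ≤ ε/16 := by
    rw [hpxeq]
    have h1 : r⁻¹ * ‖v‖ ≤ r⁻¹ * (‖vb‖ + 1) :=
      mul_le_mul_of_nonneg_left hnv (inv_nonneg.2 hr0.le)
    nlinarith
  -- nearest point of Q ∩ B(xb, 2ε) to p
  have hcomp : IsCompact (Q ∩ closedBall xb (2*ε)) :=
    (isCompact_closedBall xb (2*ε)).inter_left hQ
  have hne2 : (Q ∩ closedBall xb (2*ε)).Nonempty :=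
    ⟨x, hxQ, by rw [Metric.mem_closedBall]; linarith⟩
  obtain ⟨z, hzS, hmin⟩ := hcomp.exists_isMinOn hne2
    ((continuous_const.dist continuous_id).continuousOn (f := fun q => dist p q))
  have hzmin : ∀ q ∈ Q ∩ closedBall xb (2*ε), dist p z ≤ dist p q := fun q hq => hmin hq
  have hpz : dist p z ≤ dist p x := hzmin x ⟨hxQ, by rw [Metric.mem_closedBall]; linarith⟩
  -- z is a global nearest point of Q to p
  have hglob : ∀ q ∈ Q, dist p z ≤ dist p q := by
    intro q hq
    by_cases hqb : dist q xb ≤ 2*ε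
    · exact hzmin q ⟨hq, hqb⟩
    · push_neg at hqb
      have h1 : dist p xb ≤ dist p x + dist x xb := dist_triangle _ _ _
      have h2 : dist q xb ≤ dist q p + dist p xb := dist_triangle _ _ _
      rw [dist_comm q p] at h2
      linarith
  have hzxb : dist z xb < 9*ε/8 := by
    have h1 : dist z xb ≤ dist z p + dist p x + dist x xb :=
      le_trans (dist_triangle z p xb) (by linarith [dist_triangle p x xb])
    rw [dist_comm z p] at h1
    linarith
  have hzM : z ∈ M := ZM x v z hxQ hv hxd hvd hzS.1 hglob hzxb
  have hzx : z = x := by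
    by_contra hne'
    have h1 := huniq.2 z ⟨hzM, by rw [Metric.mem_closedBall]; linarith⟩ hne'
    linarith
  rw [hzx] at hzmin
  refine ⟨⟨hxQ, by rw [Metric.mem_closedBall]; linarith⟩, ?_⟩
  intro y hy hyx
  by_contra hcon
  push_neg at hcon
  have hyball : dist y xb ≤ ε := Metric.mem_closedBall.1 hy.2
  have hyglob : ∀ q ∈ Q, dist p y ≤ dist p q := by
    intro q hq
    exact le_trans hcon (hzx ▸ hglob q hq)
  have hyM : y ∈ M := ZM x v y hxQ hv hxd hvd hy.1 hyglob (by linarith)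
  have h1 := huniq.2 y ⟨hyM, by rw [Metric.mem_closedBall]; linarith⟩ hyx
  linarith
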